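/- Let D_r ⊂ ℂ be the disc of radius r > 1, let J₁,…,J_m be pairwise disjoint closed arcs in the unit circle 𝕋. Then the compact set L = (𝔻̄ × {0}) ∪ ⋃_{j=1}^m (J_j × 𝔻̄) ⊂ ℂ² is polynomially convex. -/

import Mathlib

open Metric Set

/-- A compact set `K ⊆ ℂ²` is polynomially convex: every point outside `K` is separated from
`K` by the modulus of a polynomial (for compact `K`, `sup_K |p|` is attained, so this is the
usual definition of coinciding with the polynomial hull). -/
def PolynomiallyConvex (K : Set (ℂ × ℂ)) : Prop :=
  ∀ z ∉ K, ∃ p : MvPolynomial (Fin 2) ℂ,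
    ∀ w ∈ K, ‖MvPolynomial.eval ![w.1, w.2] p‖ <
      ‖MvPolynomial.eval ![z.1, z.2] p‖

/-- Compatibility: the complex absolute value as an `AbsoluteValue`. -/
noncomputable def Complex.abs : AbsoluteValue ℂ ℝ where
  toFun z := ‖z‖
  map_mul' := norm_mul
  nonneg' := norm_nonneg
  eq_zero' _ := norm_eq_zero
  add_le' := norm_add_le

theorem Complex.abs_apply (z : ℂ) : Complex.abs z = ‖z‖ := rfl

@[simp]
theorem Complex.abs_ofReal (r : ℝ) : Complex.abs (r : ℂ) = |r| := Complex.norm_real r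

@[simp]
theorem Complex.abs_two : Complex.abs 2 = 2 := by
  rw [Complex.abs_apply]; norm_num

@[simp]
theorem Complex.abs_natCast (n : ℕ) : Complex.abs (n : ℂ) = n := by
  rw [Complex.abs_apply]; simp

theorem Complex.abs_exp_ofReal_mul_I (x : ℝ) : Complex.abs (Complex.exp (x * Complex.I)) = 1 :=
  Complex.norm_exp_ofReal_mul_I x

namespace PCaux

open Polynomial

/-- `f` is uniformly approximable on `K` by polynomials. -/
def Apx (K : Set ℂ) (f : ℂ → ℂ) : Prop :=
  ∀ ε > 0, ∃ p : Polynomial ℂ, ∀ x ∈ K, Complex.abs (p.eval x - f x) ≤ ε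

lemma apx_const (K : Set ℂ) (c : ℂ) : Apx K (fun _ => c) := by
  intro ε hε
  exact ⟨C c, fun x _ => by simp [le_of_lt hε]⟩

lemma apx_add {K : Set ℂ} {f g : ℂ → ℂ} (hf : Apx K f) (hg : Apx K g) :
    Apx K (fun x => f x + g x) := by
  intro ε hε
  obtain ⟨p, hp⟩ := hf (ε/2) (by linarith)
  obtain ⟨q, hq⟩ := hg (ε/2) (by linarith)
  refine ⟨p + q, fun x hx => ?_⟩
  have : p.eval x + q.eval x - (f x + g x) = (p.eval x - f x) + (q.eval x - g x) := by ring
  calc Complex.abs ((p+q).eval x - (f x + g x))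
      = Complex.abs ((p.eval x - f x) + (q.eval x - g x)) := by rw [Polynomial.eval_add, this]
    _ ≤ Complex.abs (p.eval x - f x) + Complex.abs (q.eval x - g x) := Complex.abs.add_le _ _
    _ ≤ ε/2 + ε/2 := add_le_add (hp x hx) (hq x hx)
    _ = ε := by ring

lemma apx_cmul {K : Set ℂ} {f : ℂ → ℂ} (c : ℂ) (hf : Apx K f) :
    Apx K (fun x => c * f x) := by
  intro ε hε
  have hc : (0:ℝ) < Complex.abs c + 1 := by positivity
  obtain ⟨p, hp⟩ := hf (ε / (Complex.abs c + 1)) (by positivity)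
  refine ⟨C c * p, fun x hx => ?_⟩
  have : (C c * p).eval x - c * f x = c * (p.eval x - f x) := by
    simp [Polynomial.eval_mul]; ring
  rw [this, map_mul]
  calc Complex.abs c * Complex.abs (p.eval x - f x)
      ≤ (Complex.abs c + 1) * (ε / (Complex.abs c + 1)) := by
        apply mul_le_mul (by linarith) (hp x hx) (by positivity) (by positivity)
    _ = ε := by field_simp

lemma apx_mul {K : Set ℂ} {f g : ℂ → ℂ} {Mf Mg : ℝ}
    (hf : Apx K f) (hg : Apx K g)
    (hMf : ∀ x ∈ K, Complex.abs (f x) ≤ Mf) (hMg : ∀ x ∈ K, Complex.abs (g x) ≤ Mg)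
    (hMf0 : 0 ≤ Mf) (hMg0 : 0 ≤ Mg) :
    Apx K (fun x => f x * g x) := by
  intro ε hε
  set δ : ℝ := min 1 (ε / (Mf + Mg + 1)) with hδdef
  have hδpos : 0 < δ := lt_min one_pos (by positivity)
  have hδ1 : δ ≤ 1 := min_le_left _ _
  have hδ2 : δ ≤ ε / (Mf + Mg + 1) := min_le_right _ _
  obtain ⟨p, hp⟩ := hf δ hδpos
  obtain ⟨q, hq⟩ := hg δ hδpos
  refine ⟨p * q, fun x hx => ?_⟩
  have key : (p*q).eval x - f x * g x
      = (p.eval x - f x) * q.eval x + f x * (q.eval x - g x) := by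
    simp [Polynomial.eval_mul]; ring
  have hqb : Complex.abs (q.eval x) ≤ Mg + δ := by
    calc Complex.abs (q.eval x) = Complex.abs (g x + (q.eval x - g x)) := by ring_nf
      _ ≤ Complex.abs (g x) + Complex.abs (q.eval x - g x) := Complex.abs.add_le _ _
      _ ≤ Mg + δ := add_le_add (hMg x hx) (hq x hx)
  calc Complex.abs ((p*q).eval x - f x * g x)
      ≤ Complex.abs ((p.eval x - f x) * q.eval x) + Complex.abs (f x * (q.eval x - g x)) := by
        rw [key]; exact Complex.abs.add_le _ _
    _ = Complex.abs (p.eval x - f x) * Complex.abs (q.eval x)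
        + Complex.abs (f x) * Complex.abs (q.eval x - g x) := by rw [map_mul, map_mul]
    _ ≤ δ * (Mg + δ) + Mf * δ := by
        apply add_le_add
        · exact mul_le_mul (hp x hx) hqb (by positivity) (le_of_lt hδpos)
        · exact mul_le_mul (hMf x hx) (hq x hx) (by positivity) hMf0
    _ ≤ δ * (Mg + 1) + Mf * δ := by nlinarith
    _ = δ * (Mf + Mg + 1) := by ring
    _ ≤ (ε / (Mf + Mg + 1)) * (Mf + Mg + 1) := by
        apply mul_le_mul_of_nonneg_right hδ2 (by positivity)
    _ = ε := by field_simp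

lemma apx_pow {K : Set ℂ} {f : ℂ → ℂ} {M : ℝ}
    (hf : Apx K f) (hM : ∀ x ∈ K, Complex.abs (f x) ≤ M) (hM0 : 0 ≤ M) :
    ∀ k : ℕ, Apx K (fun x => (f x) ^ k)
  | 0 => by simpa using apx_const K 1
  | (k+1) => by
    have ih := apx_pow hf hM hM0 k
    have hb : ∀ x ∈ K, Complex.abs ((f x) ^ k) ≤ M ^ k := by
      intro x hx
      rw [map_pow]
      exact pow_le_pow_left₀ (Complex.abs.nonneg _) (hM x hx) k
    have := apx_mul ih hf hb hM (pow_nonneg hM0 k) hM0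
    simpa [pow_succ] using this

lemma apx_sum {K : Set ℂ} (n : ℕ) (h : ℕ → ℂ → ℂ) (hh : ∀ i, Apx K (h i)) :
    Apx K (fun x => ∑ i ∈ Finset.range n, h i x) := by
  induction n with
  | zero => simpa using apx_const K 0
  | succ n ih =>
    have := apx_add ih (hh n)
    simpa [Finset.sum_range_succ] using this

lemma apx_limit {K : Set ℂ} {f : ℂ → ℂ}
    (h : ∀ ε > 0, ∃ g : ℂ → ℂ, Apx K g ∧ ∀ x ∈ K, Complex.abs (g x - f x) ≤ ε) :
    Apx K f := by
  intro ε hε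
  obtain ⟨g, hg, hgf⟩ := h (ε/2) (by linarith)
  obtain ⟨p, hp⟩ := hg (ε/2) (by linarith)
  refine ⟨p, fun x hx => ?_⟩
  calc Complex.abs (p.eval x - f x)
      = Complex.abs ((p.eval x - g x) + (g x - f x)) := by ring_nf
    _ ≤ Complex.abs (p.eval x - g x) + Complex.abs (g x - f x) := Complex.abs.add_le _ _
    _ ≤ ε/2 + ε/2 := add_le_add (hp x hx) (hgf x hx)
    _ = ε := by ring

lemma abs_sub_lower (x A : ℂ) : Complex.abs A - Complex.abs x ≤ Complex.abs (x - A) := by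
  have h := Complex.abs.abs_abv_sub_le_abv_sub A x
  have h2 : Complex.abs (A - x) = Complex.abs (x - A) := Complex.abs.map_sub A x
  have := abs_le.mp h
  linarith [this.2]

/-- Geometric series: the resolvent at a pole of modulus ≥ 2 is approximable on the disc. -/
lemma apx_inv_far {K : Set ℂ} (hK : ∀ x ∈ K, Complex.abs x ≤ 1)
    {A : ℂ} (hA : 2 ≤ Complex.abs A) : Apx K (fun x => (x - A)⁻¹) := by
  apply apx_limit
  intro ε hε
  obtain ⟨N, hN⟩ := exists_pow_lt_of_lt_one hε (by norm_num : (1:ℝ)/2 < 1)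
  refine ⟨fun x => ∑ n ∈ Finset.range (N+1), (-(A⁻¹)^(n+1)) * x^n, ?_, ?_⟩
  · apply apx_sum
    intro i
    intro ε' hε'
    exact ⟨Polynomial.C (-(A⁻¹)^(i+1)) * Polynomial.X ^ i, fun x hx => by
      simp [Polynomial.eval_mul, Polynomial.eval_pow, le_of_lt hε']⟩
  · intro x hx
    have hA0 : A ≠ 0 := by
      intro h; rw [h] at hA; simp at hA; linarith
    have hxle := hK x hx
    have hvabs : 1 ≤ Complex.abs (x - A) := by
      have := abs_sub_lower x A; linarith
    have hv0 : x - A ≠ 0 := by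
      intro h; rw [h] at hvabs; simp at hvabs; linarith
    have htabs : Complex.abs (x * A⁻¹) ≤ 1/2 := by
      rw [map_mul, map_inv₀]
      calc Complex.abs x * (Complex.abs A)⁻¹ ≤ 1 * (1/2) := by
            apply mul_le_mul hxle _ (by positivity) (by norm_num)
            calc (Complex.abs A)⁻¹ ≤ (2:ℝ)⁻¹ := by
                  apply inv_anti₀ (by norm_num) hA
              _ = 1/2 := by norm_num
        _ = 1/2 := by ring
    have ht1 : x * A⁻¹ ≠ 1 := by
      intro h
      rw [h] at htabs; simp at htabs; linarith
    have key : (∑ n ∈ Finset.range (N+1), (-(A⁻¹)^(n+1)) * x^n) - (x - A)⁻¹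
        = -(x*A⁻¹)^(N+1) * (x - A)⁻¹ := by
      have h1 : ∀ n ∈ Finset.range (N+1), (-(A⁻¹)^(n+1)) * x^n = -A⁻¹ * (x*A⁻¹)^n := by
        intro n _; rw [mul_pow, pow_succ]; ring
      rw [Finset.sum_congr rfl h1, ← Finset.mul_sum, geom_sum_eq ht1]
      have ht1e : x * A⁻¹ - 1 = (x - A) * A⁻¹ := by field_simp
      have hAinv : A⁻¹ * A = 1 := inv_mul_cancel₀ hA0
      rw [ht1e, div_eq_mul_inv, mul_inv, inv_inv]
      calc -A⁻¹ * (((x*A⁻¹)^(N+1) - 1) * ((x - A)⁻¹ * A)) - (x - A)⁻¹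
          = (A⁻¹ * A) * (1 - (x*A⁻¹)^(N+1)) * (x - A)⁻¹ - (x - A)⁻¹ := by ring
        _ = -(x*A⁻¹)^(N+1) * (x - A)⁻¹ := by rw [hAinv]; ring
    rw [key, map_mul, map_neg_eq_map, map_pow, map_inv₀]
    calc Complex.abs (x*A⁻¹) ^ (N+1) * (Complex.abs (x-A))⁻¹
        ≤ (1/2)^(N+1) * 1 := by
          apply mul_le_mul (pow_le_pow_left₀ (Complex.abs.nonneg _) htabs _)
            _ (by positivity) (by positivity)
          rw [inv_le_one_iff₀]; right; exact hvabs
      _ ≤ (1/2)^N := by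
          rw [mul_one, pow_succ]
          nlinarith [pow_nonneg (by norm_num : (0:ℝ) ≤ 1/2) N]
      _ ≤ ε := le_of_lt hN

/-- Pole pushing step: move the pole by at most `d/4` where `d` lower-bounds the distance
of the new pole to `K`. -/
lemma apx_inv_step {K : Set ℂ} {A B : ℂ} {d : ℝ} (hd : 0 < d)
    (hB : ∀ x ∈ K, d ≤ Complex.abs (x - B)) (hAB : Complex.abs (B - A) ≤ d/4)
    (hA : Apx K (fun x => (x - A)⁻¹)) : Apx K (fun x => (x - B)⁻¹) := by
  have huK : ∀ x ∈ K, 3*d/4 ≤ Complex.abs (x - A) := by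
    intro x hx
    have h1 : Complex.abs (x - B) ≤ Complex.abs (x - A) + Complex.abs (A - B) :=
      Complex.abs.sub_le x A B
    have h2 : Complex.abs (A - B) = Complex.abs (B - A) := Complex.abs.map_sub A B
    have := hB x hx
    linarith
  have hinvb : ∀ x ∈ K, Complex.abs ((x - A)⁻¹) ≤ 4/(3*d) := by
    intro x hx
    have h := huK x hx
    rw [map_inv₀]
    calc (Complex.abs (x - A))⁻¹ ≤ (3*d/4)⁻¹ := inv_anti₀ (by positivity) h
      _ = 4/(3*d) := by rw [inv_div]
  apply apx_limit
  intro ε hε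
  obtain ⟨N, hN⟩ := exists_pow_lt_of_lt_one (show (0:ℝ) < ε * d by positivity)
    (by norm_num : (1:ℝ)/3 < 1)
  refine ⟨fun x => ∑ n ∈ Finset.range (N+1), (B - A)^n * ((x - A)⁻¹)^(n+1), ?_, ?_⟩
  · apply apx_sum
    intro i
    exact apx_cmul _ (apx_pow hA hinvb (by positivity) (i+1))
  · intro x hx
    have hu := huK x hx
    have hv := hB x hx
    have hu0 : x - A ≠ 0 := by
      intro h; rw [h] at hu; simp at hu; linarith
    have hv0 : x - B ≠ 0 := by
      intro h; rw [h] at hv; simp at hv; linarith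
    have htabs : Complex.abs ((B - A) * (x - A)⁻¹) ≤ 1/3 := by
      rw [map_mul]
      calc Complex.abs (B - A) * Complex.abs ((x - A)⁻¹)
          ≤ (d/4) * (4/(3*d)) := by
            apply mul_le_mul hAB (hinvb x hx) (Complex.abs.nonneg _) (by positivity)
        _ = 1/3 := by field_simp
    have ht1 : (B - A) * (x - A)⁻¹ ≠ 1 := by
      intro h; rw [h] at htabs; simp at htabs; linarith
    have key : (∑ n ∈ Finset.range (N+1), (B - A)^n * ((x - A)⁻¹)^(n+1)) - (x - B)⁻¹
        = -((B - A) * (x - A)⁻¹)^(N+1) * (x - B)⁻¹ := by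
      have h1 : ∀ n ∈ Finset.range (N+1),
          (B - A)^n * ((x - A)⁻¹)^(n+1) = (x - A)⁻¹ * ((B - A) * (x - A)⁻¹)^n := by
        intro n _; rw [mul_pow, pow_succ]; ring
      rw [Finset.sum_congr rfl h1, ← Finset.mul_sum, geom_sum_eq ht1]
      have ht1e : (B - A) * (x - A)⁻¹ - 1 = (B - x) * (x - A)⁻¹ := by
        field_simp; ring
      have huinv : (x - A)⁻¹ * (x - A) = 1 := inv_mul_cancel₀ hu0
      have hBx : (B - x)⁻¹ = -(x - B)⁻¹ := by
        rw [show B - x = -(x - B) by ring, inv_neg]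
      rw [ht1e, div_eq_mul_inv, mul_inv, inv_inv]
      calc (x - A)⁻¹ * ((((B - A) * (x - A)⁻¹)^(N+1) - 1) * ((B - x)⁻¹ * (x - A)))
            - (x - B)⁻¹
          = ((x - A)⁻¹ * (x - A)) * ((((B - A) * (x - A)⁻¹)^(N+1) - 1) * (B - x)⁻¹)
            - (x - B)⁻¹ := by ring
        _ = -((B - A) * (x - A)⁻¹)^(N+1) * (x - B)⁻¹ := by rw [huinv, hBx]; ring
    rw [key, map_mul, map_neg_eq_map, map_pow, map_inv₀]
    have hvinv : (Complex.abs (x - B))⁻¹ ≤ d⁻¹ := inv_anti₀ hd hv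
    apply le_of_lt
    calc Complex.abs ((B - A) * (x - A)⁻¹) ^ (N+1) * (Complex.abs (x - B))⁻¹
        ≤ (1/3)^(N+1) * d⁻¹ := by
          apply mul_le_mul (pow_le_pow_left₀ (Complex.abs.nonneg _) htabs _)
            hvinv (by positivity) (by positivity)
      _ ≤ (1/3)^N * d⁻¹ := by
          apply mul_le_mul_of_nonneg_right _ (by positivity)
          rw [pow_succ]
          nlinarith [pow_nonneg (by norm_num : (0:ℝ) ≤ 1/3) N]
      _ < (ε * d) * d⁻¹ := by
          apply mul_lt_mul_of_pos_right hN (by positivity)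
      _ = ε := by field_simp

/-- Pole pushing along a segment that stays at distance `≥ d` from `K`. -/
lemma apx_inv_segment {K : Set ℂ} {A B : ℂ} {d : ℝ} (hd : 0 < d)
    (hseg : ∀ y ∈ segment ℝ A B, ∀ x ∈ K, d ≤ Complex.abs (x - y))
    (hA : Apx K (fun x => (x - A)⁻¹)) : Apx K (fun x => (x - B)⁻¹) := by
  set n : ℕ := ⌈(Complex.abs (B - A)) * 4 / d⌉₊ + 1 with hn
  have hn0 : 0 < n := Nat.succ_pos _
  have hn0' : (0:ℝ) < n := by exact_mod_cast hn0
  have hnle : (Complex.abs (B - A)) * 4 / d ≤ (n:ℝ) := by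
    calc (Complex.abs (B - A)) * 4 / d ≤ (⌈(Complex.abs (B - A)) * 4 / d⌉₊ : ℝ) :=
          Nat.le_ceil _
      _ ≤ (n:ℝ) := by rw [hn]; push_cast; linarith
  have hstepd : Complex.abs (B - A) / n ≤ d / 4 := by
    rw [div_le_div_iff₀ hn0' (by norm_num : (0:ℝ) < 4)]
    rw [div_le_iff₀ hd] at hnle
    linarith
  set P : ℕ → ℂ := fun k => A + ((k:ℂ)/(n:ℂ)) * (B - A) with hP
  have hPmem : ∀ k, k ≤ n → P k ∈ segment ℝ A B := by
    intro k hk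
    rw [segment_eq_image]
    refine ⟨(k:ℝ)/(n:ℝ), ⟨by positivity, ?_⟩, ?_⟩
    · rw [div_le_one hn0']; exact_mod_cast hk
    · rw [hP]
      simp only [Complex.real_smul]
      push_cast
      ring
  have hstep : ∀ k, Complex.abs (P (k+1) - P k) ≤ d/4 := by
    intro k
    have : P (k+1) - P k = (1/(n:ℂ)) * (B - A) := by
      rw [hP]; push_cast; field_simp; ring
    rw [this, map_mul, map_div₀]
    simp only [map_one, Complex.abs_natCast]
    calc 1 / (n:ℝ) * Complex.abs (B - A) = Complex.abs (B - A) / n := by ring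
      _ ≤ d/4 := hstepd
  have main : ∀ k, k ≤ n → Apx K (fun x => (x - P k)⁻¹) := by
    intro k
    induction k with
    | zero =>
      intro _
      have : P 0 = A := by rw [hP]; simp
      rw [this]; exact hA
    | succ k ih =>
      intro hk
      have ihk := ih (by omega)
      exact apx_inv_step hd (fun x hx => hseg (P (k+1)) (hPmem (k+1) hk) x hx)
        (hstep k) ihk
  have hPn : P n = B := by
    rw [hP]
    have : ((n:ℂ)/(n:ℂ)) = 1 := by
      apply div_self
      exact_mod_cast hn0.ne'
    simp only [this]
    ring_nf
  have := main n le_rfl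
  rw [hPn] at this
  exact this

lemma isCompact_segment' (A B : ℂ) : IsCompact (segment ℝ A B) := by
  rw [segment_eq_image]
  exact isCompact_Icc.image (by continuity)

/-- Separation of a point of the closed disc from a compact subset of the circle
avoiding it, given a point `ζ` of the circle not in `K`. -/
lemma sep_point {K : Set ℂ} (hKc : IsCompact K) (hKS : ∀ x ∈ K, Complex.abs x = 1)
    {z ζ : ℂ} (hz : Complex.abs z ≤ 1) (hzK : z ∉ K)
    (hζ : Complex.abs ζ = 1) (hζK : ζ ∉ K) :
    ∃ Q : Polynomial ℂ, Complex.abs (Q.eval z) = 1 ∧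
      ∀ x ∈ K, Complex.abs (Q.eval x) ≤ 1/4 := by
  rcases Set.eq_empty_or_nonempty K with hKe | hKne
  · exact ⟨1, by simp, fun x hx => by rw [hKe] at hx; exact absurd hx (Set.notMem_empty x)⟩
  -- the path from 2ζ to 0 to z avoids K
  set P : Set ℂ := segment ℝ (2*ζ) 0 ∪ segment ℝ 0 z with hPdef
  have hPc : IsCompact P := (isCompact_segment' _ _).union (isCompact_segment' _ _)
  have hPne : P.Nonempty := ⟨0, Or.inl (right_mem_segment ℝ _ _)⟩
  have hPK : ∀ y ∈ P, y ∉ K := by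
    rintro y (hy | hy) hyK
    · rw [segment_eq_image] at hy
      obtain ⟨θ, hθ, rfl⟩ := hy
      have habs : Complex.abs ((1-θ) • (2*ζ) + θ • (0:ℂ)) = 2*(1-θ) := by
        simp only [smul_zero, add_zero, Complex.real_smul, map_mul,
          Complex.abs_ofReal, Complex.abs_two, hζ]
        rw [abs_of_nonneg (by linarith [hθ.2])]
        ring
      have hyK' : ((1-θ) • (2*ζ) + θ • (0:ℂ)) ∈ K := hyK
      have h1 := hKS _ hyK'
      rw [habs] at h1
      have hθval : θ = 1/2 := by linarith
      have heq : (1-θ) • (2*ζ) + θ • (0:ℂ) = ζ := by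
        rw [hθval]; simp only [smul_zero, add_zero, Complex.real_smul]; push_cast; ring
      rw [heq] at hyK'
      exact hζK hyK'
    · rw [segment_eq_image] at hy
      obtain ⟨θ, hθ, rfl⟩ := hy
      have habs : Complex.abs ((1-θ) • (0:ℂ) + θ • z) = θ * Complex.abs z := by
        simp only [smul_zero, zero_add, Complex.real_smul, map_mul, Complex.abs_ofReal]
        rw [abs_of_nonneg hθ.1]
      have hyK' : ((1-θ) • (0:ℂ) + θ • z) ∈ K := hyK
      have h1 := hKS _ hyK'
      rw [habs] at h1
      have hθ1 : θ = 1 := by nlinarith [hθ.1, hθ.2, Complex.abs.nonneg z, hz]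
      have heq : (1-θ) • (0:ℂ) + θ • z = z := by rw [hθ1]; simp
      rw [heq] at hyK'
      exact hzK hyK'
  -- minimal distance of the path to K
  obtain ⟨y₀, hy₀P, hy₀min⟩ := hPc.exists_isMinOn hPne
    ((continuous_infDist_pt K).continuousOn)
  set d : ℝ := infDist y₀ K with hddef
  have hd : 0 < d :=
    (hKc.isClosed.notMem_iff_infDist_pos hKne).mp (hPK y₀ hy₀P)
  have hdist : ∀ y ∈ P, ∀ x ∈ K, d ≤ Complex.abs (x - y) := by
    intro y hy x hx
    have h1 : d ≤ infDist y K := hy₀min hy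
    have h2 : infDist y K ≤ dist y x := infDist_le_dist_of_mem hx
    rw [Complex.dist_eq, ← Complex.abs_apply] at h2
    have h3 : Complex.abs (y - x) = Complex.abs (x - y) := Complex.abs.map_sub y x
    linarith [h3 ▸ h2]
  -- pole pushing
  have hbase : Apx K (fun x => (x - 2*ζ)⁻¹) := by
    apply apx_inv_far (fun x hx => le_of_eq (hKS x hx))
    rw [map_mul, Complex.abs_two, hζ, mul_one]
  have hmid : Apx K (fun x => (x - 0)⁻¹) := by
    apply apx_inv_segment hd (fun y hy x hx => hdist y (Or.inl hy) x hx) hbase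
  have hfin : Apx K (fun x => (x - z)⁻¹) := by
    apply apx_inv_segment hd (fun y hy x hx => hdist y (Or.inr hy) x hx) hmid
  obtain ⟨p, hp⟩ := hfin (1/8) (by norm_num)
  refine ⟨(Polynomial.X - Polynomial.C z) * p - Polynomial.C 1, ?_, ?_⟩
  · simp [Polynomial.eval_mul]
  · intro x hx
    have hxz : x - z ≠ 0 := sub_ne_zero.mpr (fun h => hzK (h ▸ hx))
    have hQx : ((Polynomial.X - Polynomial.C z) * p - Polynomial.C 1).eval x
        = (x - z) * (p.eval x - (x - z)⁻¹) := by
      simp only [Polynomial.eval_sub, Polynomial.eval_mul, Polynomial.eval_X,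
        Polynomial.eval_C]
      rw [mul_sub, mul_inv_cancel₀ hxz]
    rw [hQx, map_mul]
    have hxb : Complex.abs (x - z) ≤ 2 := by
      have h1 : Complex.abs (x - z) ≤ Complex.abs x + Complex.abs z := by
        simpa [sub_eq_add_neg] using Complex.abs.add_le x (-z)
      have h2 := hKS x hx
      linarith
    calc Complex.abs (x - z) * Complex.abs (p.eval x - (x - z)⁻¹)
        ≤ 2 * (1/8) := mul_le_mul hxb (hp x hx) (Complex.abs.nonneg _) (by norm_num)
      _ = 1/4 := by norm_num

/-- There is a point of the unit circle not covered by the arcs. -/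
lemma exists_gap (m : ℕ) (a b : Fin m → ℝ)
    (hab : ∀ j, a j ≤ b j) (hlen : ∀ j, b j - a j < 2 * Real.pi)
    (J : Fin m → Set ℂ)
    (hJ : ∀ j, J j = (fun θ : ℝ => Complex.exp (θ * Complex.I)) '' Set.Icc (a j) (b j))
    (hdisj : Pairwise (Function.onFun Disjoint J)) :
    ∃ ζ : ℂ, Complex.abs ζ = 1 ∧ ζ ∉ ⋃ j, J j := by
  rcases isEmpty_or_nonempty (Fin m) with hm | hm
  · exact ⟨1, by simp, by simp [Set.iUnion_of_empty]⟩
  have hπ := Real.pi_pos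
  set i0 : Fin m := Classical.arbitrary (Fin m) with hi0
  set θs : ℝ := (a i0 + b i0)/2 + Real.pi with hθs
  set ζ₀ : ℂ := Complex.exp (θs * Complex.I) with hζ₀
  have hζ₀abs : Complex.abs ζ₀ = 1 := Complex.abs_exp_ofReal_mul_I θs
  have hnotJ0 : ζ₀ ∉ J i0 := by
    rw [hJ i0]
    rintro ⟨φ, hφ, hexp⟩
    rw [Complex.exp_eq_exp_iff_exists_int] at hexp
    obtain ⟨n, hn⟩ := hexp
    have h' : (φ:ℂ) * Complex.I = ((θs:ℂ) + (n:ℂ)*(2*(Real.pi:ℂ))) * Complex.I := by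
      rw [hn]; ring
    have h'' : (φ:ℂ) = (θs:ℂ) + (n:ℂ)*(2*(Real.pi:ℂ)) :=
      mul_right_cancel₀ Complex.I_ne_zero h'
    have hφr : φ = θs + (n:ℝ)*(2*Real.pi) := by exact_mod_cast h''
    have hlen0 := hlen i0
    rcases le_or_gt 0 n with hn0 | hn0
    · have : (0:ℝ) ≤ (n:ℝ) := by exact_mod_cast hn0
      have := hφ.2
      rw [hφr, hθs] at this
      nlinarith
    · have hn1 : n ≤ -1 := by omega
      have : (n:ℝ) ≤ -1 := by exact_mod_cast hn1
      have := hφ.1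
      rw [hφr, hθs] at this
      nlinarith
  by_contra hcon
  push_neg at hcon
  -- the circle is covered by the arcs
  set S : Set ℂ := Set.range (fun θ : ℝ => Complex.exp (θ * Complex.I)) with hS
  have hSsub : S ⊆ ⋃ j, J j := by
    rintro x ⟨θ, rfl⟩
    exact hcon _ (Complex.abs_exp_ofReal_mul_I θ)
  have hSpre : IsPreconnected S := by
    rw [hS, ← Set.image_univ]
    have hc : Continuous (fun θ : ℝ => Complex.exp (θ * Complex.I)) :=
      (Complex.continuous_exp.comp (Complex.continuous_ofReal.mul continuous_const))
    exact isPreconnected_univ.image _ hc.continuousOn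
  have hJcl : ∀ j, IsClosed (J j) := by
    intro j
    rw [hJ j]
    exact (isCompact_Icc.image (Complex.continuous_exp.comp (Complex.continuous_ofReal.mul continuous_const))).isClosed
  set V : Set ℂ := ⋃ j, ⋃ (_ : j ≠ i0), J j with hV
  have hVcl : IsClosed V :=
    isClosed_iUnion_of_finite (fun j => isClosed_iUnion_of_finite (fun _ => hJcl j))
  have hcover : S ⊆ (J i0)ᶜ ∪ Vᶜ := by
    intro x hx
    obtain ⟨j, hj⟩ := Set.mem_iUnion.mp (hSsub hx)
    by_cases hji : j = i0
    · right
      intro hxV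
      obtain ⟨j', hj'⟩ := Set.mem_iUnion.mp hxV
      obtain ⟨hj'ne, hxj'⟩ := Set.mem_iUnion.mp hj'
      exact Set.disjoint_left.mp (hdisj hj'ne) hxj' (hji ▸ hj)
    · left
      intro hxi0
      exact Set.disjoint_left.mp (hdisj hji) hj hxi0
  have hne1 : (S ∩ (J i0)ᶜ).Nonempty := ⟨ζ₀, ⟨θs, rfl⟩, hnotJ0⟩
  have hne2 : (S ∩ Vᶜ).Nonempty := by
    refine ⟨Complex.exp (a i0 * Complex.I), ⟨a i0, rfl⟩, ?_⟩
    have hmem : Complex.exp (a i0 * Complex.I) ∈ J i0 := by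
      rw [hJ i0]; exact ⟨a i0, ⟨le_refl _, hab i0⟩, rfl⟩
    intro hxV
    obtain ⟨j', hj'⟩ := Set.mem_iUnion.mp hxV
    obtain ⟨hj'ne, hxj'⟩ := Set.mem_iUnion.mp hj'
    exact Set.disjoint_left.mp (hdisj hj'ne) hxj' hmem
  obtain ⟨x, hxS, hxu, hxv⟩ := hSpre (J i0)ᶜ Vᶜ (hJcl i0).isOpen_compl hVcl.isOpen_compl
    hcover hne1 hne2
  obtain ⟨j, hj⟩ := Set.mem_iUnion.mp (hSsub hxS)
  by_cases hji : j = i0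
  · exact hxu (hji ▸ hj)
  · exact hxv (Set.mem_iUnion.mpr ⟨j, Set.mem_iUnion.mpr ⟨hji, hj⟩⟩)

lemma eval_eval₂ (Q : Polynomial ℂ) (v : Fin 2 → ℂ) :
    MvPolynomial.eval v (Polynomial.eval₂ MvPolynomial.C (MvPolynomial.X 0) Q)
      = Q.eval (v 0) := by
  rw [Polynomial.hom_eval₂]
  have h1 : (MvPolynomial.eval v).comp (MvPolynomial.C : ℂ →+* MvPolynomial (Fin 2) ℂ)
      = RingHom.id ℂ := by ext r; simp
  rw [h1, MvPolynomial.eval_X]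
  rfl

end PCaux

/-- `L = (𝔻̄ × {0}) ∪ ⋃ⱼ (Jⱼ × 𝔻̄)` is polynomially convex, for pairwise
disjoint proper closed arcs `J₁,…,J_m` of the unit circle. -/
theorem polynomiallyConvex_disc_union_arcs (m : ℕ) (a b : Fin m → ℝ)
    (hab : ∀ j, a j ≤ b j) (hlen : ∀ j, b j - a j < 2 * Real.pi)
    (J : Fin m → Set ℂ)
    (hJ : ∀ j, J j = (fun θ : ℝ => Complex.exp (θ * Complex.I)) '' Icc (a j) (b j))
    (hdisj : Pairwise (Function.onFun Disjoint J)) :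
    PolynomiallyConvex
      ((closedBall (0:ℂ) 1 ×ˢ ({0} : Set ℂ)) ∪ ⋃ j, (J j ×ˢ closedBall (0:ℂ) 1)) := by
  intro z hz
  have habs1 : ∀ x ∈ ⋃ j, J j, Complex.abs x = 1 := by
    intro x hx
    obtain ⟨j, hj⟩ := Set.mem_iUnion.mp hx
    rw [hJ j] at hj
    obtain ⟨θ, _, rfl⟩ := hj
    exact Complex.abs_exp_ofReal_mul_I θ
  have hwL1 : ∀ w : ℂ × ℂ,
      w ∈ (closedBall (0:ℂ) 1 ×ˢ ({0} : Set ℂ)) ∪ ⋃ j, (J j ×ˢ closedBall (0:ℂ) 1) →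
      Complex.abs w.1 ≤ 1 ∧ Complex.abs w.2 ≤ 1 := by
    intro w hw
    rcases hw with hw | hw
    · obtain ⟨hw1, hw2⟩ := hw
      rw [mem_closedBall_zero_iff] at hw1
      constructor
      · exact hw1
      · rw [Set.mem_singleton_iff] at hw2
        rw [hw2]; simp
    · obtain ⟨j, hj⟩ := Set.mem_iUnion.mp hw
      obtain ⟨hw1, hw2⟩ := hj
      rw [mem_closedBall_zero_iff] at hw2
      exact ⟨le_of_eq (habs1 w.1 (Set.mem_iUnion.mpr ⟨j, hw1⟩)), hw2⟩
  by_cases h1 : 1 < Complex.abs z.1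
  · refine ⟨MvPolynomial.X 0, fun w hw => ?_⟩
    simp only [MvPolynomial.eval_X, Matrix.cons_val_zero]
    exact lt_of_le_of_lt (hwL1 w hw).1 h1
  by_cases h2 : 1 < Complex.abs z.2
  · refine ⟨MvPolynomial.X 1, fun w hw => ?_⟩
    simp only [MvPolynomial.eval_X, Matrix.cons_val_one, Matrix.head_cons]
    exact lt_of_le_of_lt (hwL1 w hw).2 h2
  push_neg at h1 h2
  have hz2 : z.2 ≠ 0 := by
    intro hz20
    apply hz
    left
    exact ⟨mem_closedBall_zero_iff.mpr h1, Set.mem_singleton_iff.mpr hz20⟩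
  have hz1K : z.1 ∉ ⋃ j, J j := by
    intro hmem
    obtain ⟨j, hj⟩ := Set.mem_iUnion.mp hmem
    exact hz (Or.inr (Set.mem_iUnion.mpr ⟨j, ⟨hj, mem_closedBall_zero_iff.mpr h2⟩⟩))
  obtain ⟨ζ, hζ1, hζK⟩ := PCaux.exists_gap m a b hab hlen J hJ hdisj
  have hKc : IsCompact (⋃ j, J j) := by
    apply isCompact_iUnion
    intro j
    rw [hJ j]
    exact isCompact_Icc.image (Complex.continuous_exp.comp (Complex.continuous_ofReal.mul continuous_const))
  obtain ⟨Q, hQz, hQK⟩ := PCaux.sep_point hKc habs1 h1 hz1K hζ1 hζK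
  have hz2pos : 0 < Complex.abs z.2 := by
    simpa [Complex.abs.pos_iff] using hz2
  obtain ⟨N, hN⟩ := exists_pow_lt_of_lt_one hz2pos (by norm_num : (1:ℝ)/4 < 1)
  refine ⟨MvPolynomial.X 1 * (Polynomial.eval₂ MvPolynomial.C (MvPolynomial.X 0) Q)^N,
    fun w hw => ?_⟩
  have heval : ∀ v : Fin 2 → ℂ,
      MvPolynomial.eval v (MvPolynomial.X 1 *
        (Polynomial.eval₂ MvPolynomial.C (MvPolynomial.X 0) Q)^N)
      = v 1 * (Q.eval (v 0))^N := by
    intro v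
    rw [map_mul, map_pow, MvPolynomial.eval_X, PCaux.eval_eval₂]
  rw [heval, heval]
  simp only [Matrix.cons_val_zero, Matrix.cons_val_one, Matrix.head_cons]
  rw [← Complex.abs_apply, ← Complex.abs_apply, map_mul, map_mul, map_pow, map_pow, hQz, one_pow, mul_one]
  rcases hw with hw' | hw'
  · obtain ⟨_, hw2⟩ := hw'
    rw [Set.mem_singleton_iff] at hw2
    rw [hw2]
    simpa using hz2pos
  · obtain ⟨j, hj⟩ := Set.mem_iUnion.mp hw'
    obtain ⟨hw1, hw2⟩ := hj
    rw [mem_closedBall_zero_iff] at hw2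
    have hQw : Complex.abs (Q.eval w.1) ≤ 1/4 :=
      hQK w.1 (Set.mem_iUnion.mpr ⟨j, hw1⟩)
    calc Complex.abs w.2 * Complex.abs (Q.eval w.1) ^ N
        ≤ 1 * (1/4)^N := by
          apply mul_le_mul hw2 (pow_le_pow_left₀ (Complex.abs.nonneg _) hQw N)
            (by positivity) (by norm_num)
      _ = (1/4)^N := by ring
      _ < Complex.abs z.2 := hN
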